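/- arXiv:1903.02287 — 2 statements merged into one kernel-verified Lean document; each statement's English description precedes it below -/
import Mathlib

section
/- For p an odd prime, the nil clean divisor graph of ℤ/(2p) has {p} as a dominating set: every vertex other than p is adjacent to p. Moreover no single other vertex dominates the graph when p > 3, so {p} is the unique smallest dominating set. -/
def IsNilCleanElem {R : Type*} [CommRing R] (x : R) : Prop :=
  ∃ e n : R, IsIdempotentElem e ∧ IsNilpotent n ∧ x = e + n

def NCVertex {R : Type*} [CommRing R] (x : R) : Prop :=
  x ≠ 0 ∧ ∃ y : R, y ≠ 0 ∧ y ≠ x ∧ IsNilCleanElem (x * y)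

def NCAdj {R : Type*} [CommRing R] (x y : R) : Prop :=
  x ≠ y ∧ NCVertex x ∧ NCVertex y ∧ IsNilCleanElem (x * y)

lemma zmod2_cases : ∀ a : ZMod 2, a = 0 ∨ a = 1 := by decide

lemma nc_map {R S : Type*} [CommRing R] [CommRing S] (f : R →+* S) {x : R}
    (h : IsNilCleanElem x) : IsNilCleanElem (f x) := by
  obtain ⟨e, n, he, hn, rfl⟩ := h
  exact ⟨f e, f n, by simpa [IsIdempotentElem, ← map_mul] using congrArg f he,
    hn.map f, by simp⟩

lemma nc_field {F : Type*} [Field F] {x : F} :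
    IsNilCleanElem x ↔ x = 0 ∨ x = 1 := by
  constructor
  · rintro ⟨e, n, he, hn, rfl⟩
    rw [hn.eq_zero, add_zero]
    exact IsIdempotentElem.iff_eq_zero_or_one.mp he
  · rintro (rfl | rfl)
    · exact ⟨0, 0, by simp [IsIdempotentElem], by simp, by simp⟩
    · exact ⟨1, 0, by simp [IsIdempotentElem], by simp, by simp⟩

lemma nc_prod {A B : Type*} [CommRing A] [CommRing B] {x : A × B} :
    IsNilCleanElem x ↔ IsNilCleanElem x.1 ∧ IsNilCleanElem x.2 := by
  constructor
  · intro h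
    exact ⟨nc_map (RingHom.fst A B) h, nc_map (RingHom.snd A B) h⟩
  · rintro ⟨⟨e1, n1, he1, ⟨k1, hk1⟩, h1⟩, ⟨e2, n2, he2, ⟨k2, hk2⟩, h2⟩⟩
    refine ⟨(e1, e2), (n1, n2), ?_, ⟨k1 + k2, ?_⟩, ?_⟩
    · exact Prod.ext he1 he2
    · ext
      · simp [pow_add, hk1]
      · simp [pow_add, hk2, pow_mul_comm']
    · exact Prod.ext (by simpa using h1) (by simpa using h2)

theorem stmt15 (p : ℕ) (hp : p.Prime) (hodd : Odd p) (hp3 : 3 < p) :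
    (∀ x : ZMod (2 * p), NCVertex x → x ≠ (p : ZMod (2 * p)) →
      NCAdj x (p : ZMod (2 * p))) ∧
    (∀ q : ZMod (2 * p), NCVertex q → q ≠ (p : ZMod (2 * p)) →
      ∃ x : ZMod (2 * p), NCVertex x ∧ x ≠ q ∧ ¬ NCAdj x q) := by
  haveI : Fact p.Prime := ⟨hp⟩
  haveI : Fact (Nat.Prime 2) := ⟨Nat.prime_two⟩
  haveI : Fact (1 < 2 * p) := ⟨by omega⟩
  have hcop : Nat.Coprime 2 p := (Nat.coprime_primes Nat.prime_two hp).mpr (by omega)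
  set e := ZMod.chineseRemainder hcop with he
  have ncE : ∀ x : ZMod (2 * p), IsNilCleanElem (e x) ↔ IsNilCleanElem x := by
    intro x
    constructor
    · intro h
      have := nc_map (e.symm : ZMod 2 × ZMod p →+* ZMod (2*p)) h
      simpa using this
    · exact nc_map (e : ZMod (2*p) →+* ZMod 2 × ZMod p)
  have hecast : ∀ k : ℕ, e (k : ZMod (2 * p)) = ((k : ZMod 2), (k : ZMod p)) := by
    intro k
    have := map_natCast (e : ZMod (2*p) →+* ZMod 2 × ZMod p) k
    simpa [Prod.ext_iff] using this
  have hp2 : (p : ZMod 2) = 1 := by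
    have h2 : p % 2 = 1 := Nat.odd_iff.mp hodd
    rw [← ZMod.natCast_mod p 2, h2, Nat.cast_one]
  have hep : e (p : ZMod (2 * p)) = (1, 0) := by
    rw [hecast p, hp2, ZMod.natCast_self]
  have hall2 := zmod2_cases
  have h2v : ((2:ℕ) : ZMod p).val = 2 := ZMod.val_natCast_of_lt (by omega)
  have h2ne0 : (2 : ZMod p) ≠ 0 := by
    intro h
    have h' : ((2:ℕ) : ZMod p) = 0 := by push_cast; exact h
    rw [h'] at h2v; simp [ZMod.val_zero] at h2v
  have h2ne1 : (2 : ZMod p) ≠ 1 := by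
    intro h
    have h' : ((2:ℕ) : ZMod p) = 1 := by push_cast; exact h
    rw [h', ZMod.val_one] at h2v; omega
  have hpne0 : (p : ZMod (2 * p)) ≠ 0 := by
    intro h
    have h' := congrArg e h
    rw [hep, map_zero] at h'
    have := congrArg Prod.fst h'
    simp at this
  have hpne1 : (p : ZMod (2 * p)) ≠ 1 := by
    intro h
    have h' := congrArg e h
    rw [hep, map_one] at h'
    have h2 : (0 : ZMod p) = 1 := congrArg Prod.snd h'
    exact zero_ne_one h2
  have hmulp : ∀ x : ZMod (2 * p), IsNilCleanElem (x * (p : ZMod (2 * p))) := by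
    intro x
    rw [← ncE, map_mul, hep, nc_prod]
    constructor
    · rcases hall2 ((e x * ((1 : ZMod 2), (0 : ZMod p))).1) with h | h <;>
        rw [nc_field] <;> tauto
    · rw [nc_field]; left
      show (e x).2 * 0 = 0
      exact mul_zero _
  have hvert : ∀ x : ZMod (2 * p), x ≠ 0 → NCVertex x := by
    intro x hx
    refine ⟨hx, ?_⟩
    by_cases hxp : x = (p : ZMod (2 * p))
    · refine ⟨1, one_ne_zero, ?_, ?_⟩
      · rw [hxp]; exact fun h => hpne1 h.symm
      · rw [mul_one, hxp]
        simpa using hmulp 1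
    · exact ⟨(p : ZMod (2 * p)), hpne0, fun h => hxp h.symm, hmulp x⟩
  constructor
  · intro x hx hxp
    exact ⟨hxp, hx, hvert _ hpne0, hmulp x⟩
  · intro q hq hqp
    obtain ⟨hq0, -⟩ := hq
    have hq2 : (e q).2 ≠ 0 := by
      intro h
      have hq1 : (e q).1 = 1 := by
        rcases hall2 (e q).1 with h1 | h1
        · exfalso; apply hq0
          have hz : e q = 0 := Prod.ext (by simpa using h1) (by simpa using h)
          simpa using congrArg e.symm hz
        · exact h1
      apply hqp
      have : e q = e (p : ZMod (2 * p)) := by rw [hep]; exact Prod.ext hq1 h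
      exact e.injective this
    set x : ZMod (2 * p) := e.symm ((e q).1 + 1, 2 * ((e q).2)⁻¹) with hxdef
    have hex : e x = ((e q).1 + 1, 2 * ((e q).2)⁻¹) := by
      rw [hxdef]; exact e.apply_symm_apply _
    have hx0 : x ≠ 0 := by
      intro h
      have h' := congrArg e h
      rw [hex, map_zero] at h'
      have h2 : (2 : ZMod p) * ((e q).2)⁻¹ = 0 := congrArg Prod.snd h'
      rcases mul_eq_zero.mp h2 with h3 | h3
      · exact h2ne0 h3
      · exact inv_ne_zero hq2 h3
    have hxq : x ≠ q := by
      intro h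
      have h' := congrArg e h
      rw [hex] at h'
      have h1 : (e q).1 + 1 = (e q).1 := congrArg Prod.fst h'
      have h2 : (e q).1 + 1 = (e q).1 + 0 := by rw [add_zero]; exact h1
      exact one_ne_zero (add_left_cancel h2)
    refine ⟨x, hvert x hx0, hxq, ?_⟩
    rintro ⟨-, -, -, hnc⟩
    rw [← ncE, map_mul, hex, nc_prod] at hnc
    have h2nc := hnc.2
    have hcalc : ((((e q).1 + 1, 2 * ((e q).2)⁻¹) : ZMod 2 × ZMod p) * e q).2
        = (2 : ZMod p) := by
      show (2 : ZMod p) * ((e q).2)⁻¹ * (e q).2 = 2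
      rw [mul_assoc, inv_mul_cancel₀ hq2, mul_one]
    rw [hcalc, nc_field] at h2nc
    tauto
end

section
/- For a prime p > 3 with p ≡ 2 (mod 3), the clique number of the nil clean divisor graph of ℤ/(3p) is exactly 3: {p, 2p−1, 3p−1} is a clique, and there is no set of 4 pairwise adjacent vertices. -/
lemma nilclean_of_idem {R : Type*} [CommRing R] {x : R} (h : IsIdempotentElem x) :
    IsNilCleanElem x :=
  ⟨x, 0, h, IsNilpotent.zero, (add_zero x).symm⟩

lemma nilclean_map {R S : Type*} [CommRing R] [CommRing S] (f : R ≃+* S) {x : R}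
    (h : IsNilCleanElem x) : IsNilCleanElem (f x) := by
  obtain ⟨e, n, he, hn, rfl⟩ := h
  refine ⟨f e, f n, ?_, ?_, by rw [map_add]⟩
  · show f e * f e = f e
    rw [← map_mul, he]
  · obtain ⟨k, hk⟩ := hn
    exact ⟨k, by rw [← map_pow, hk, map_zero]⟩

lemma idem_of_nilclean {R : Type*} [CommRing R] [IsReduced R] {x : R}
    (h : IsNilCleanElem x) : x * x = x := by
  obtain ⟨e, n, he, hn, rfl⟩ := h
  rw [hn.eq_zero, add_zero]
  exact he

lemma comp01 {p : ℕ} [Fact p.Prime] {x : ZMod 3 × ZMod p} (h : IsNilCleanElem x) :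
    (x.1 = 0 ∨ x.1 = 1) ∧ (x.2 = 0 ∨ x.2 = 1) := by
  have hx := idem_of_nilclean h
  constructor
  · have h1 : x.1 * x.1 = x.1 := by rw [← Prod.fst_mul, hx]
    have : x.1 * (x.1 - 1) = 0 := by ring_nf; linear_combination h1
    rcases mul_eq_zero.mp this with h' | h'
    · exact Or.inl h'
    · exact Or.inr (sub_eq_zero.mp h')
  · have h1 : x.2 * x.2 = x.2 := by rw [← Prod.snd_mul, hx]
    have : x.2 * (x.2 - 1) = 0 := by ring_nf; linear_combination h1
    rcases mul_eq_zero.mp this with h' | h'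
    · exact Or.inl h'
    · exact Or.inr (sub_eq_zero.mp h')

lemma zmod3_pair : ∀ u v : ZMod 3, u ≠ 0 → v ≠ 0 → u ≠ v →
    (u * v = 0 ∨ u * v = 1) → False := by decide

lemma zmod3_triple : ∀ u v w : ZMod 3, u ≠ v → u ≠ w → v ≠ w →
    (u * v = 0 ∨ u * v = 1) → (u * w = 0 ∨ u * w = 1) →
    (v * w = 0 ∨ v * w = 1) → False := by decide

section Neg

variable {p : ℕ} [Fact p.Prime]

/-- pairwise product condition -/
def PP (X Y : ZMod 3 × ZMod p) : Prop :=
  (X.1 * Y.1 = 0 ∨ X.1 * Y.1 = 1) ∧ (X.2 * Y.2 = 0 ∨ X.2 * Y.2 = 1)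

lemma pair_lemma {X Y : ZMod 3 × ZMod p} (hX : X ≠ 0) (hY : Y ≠ 0) (hXY : X ≠ Y)
    (h2X : X.2 = 0) (h2Y : Y.2 = 0) (hP : PP X Y) : False := by
  have hX1 : X.1 ≠ 0 := fun h => hX (Prod.ext h h2X)
  have hY1 : Y.1 ≠ 0 := fun h => hY (Prod.ext h h2Y)
  have hne : X.1 ≠ Y.1 := fun h => hXY (Prod.ext h (h2X.trans h2Y.symm))
  exact zmod3_pair _ _ hX1 hY1 hne hP.1

lemma triple_lemma {X Y Z : ZMod 3 × ZMod p} (hXY : X ≠ Y) (hXZ : X ≠ Z) (hYZ : Y ≠ Z)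
    (h2X : X.2 ≠ 0) (h2Y : Y.2 ≠ 0) (h2Z : Z.2 ≠ 0)
    (hPXY : PP X Y) (hPXZ : PP X Z) (hPYZ : PP Y Z) : False := by
  have e1 : X.2 * Y.2 = 1 := hPXY.2.resolve_left (mul_ne_zero h2X h2Y)
  have e2 : X.2 * Z.2 = 1 := hPXZ.2.resolve_left (mul_ne_zero h2X h2Z)
  have e3 : Y.2 * Z.2 = 1 := hPYZ.2.resolve_left (mul_ne_zero h2Y h2Z)
  have hYZ2 : Y.2 = Z.2 := mul_left_cancel₀ h2X (e1.trans e2.symm)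
  have e4 : Y.2 * Y.2 = 1 := by rw [← hYZ2] at e3; exact e3
  have hXY2 : X.2 = Y.2 := mul_right_cancel₀ h2Y (e1.trans e4.symm)
  have hXZ2 : X.2 = Z.2 := hXY2.trans hYZ2
  have d1 : X.1 ≠ Y.1 := fun h => hXY (Prod.ext h hXY2)
  have d2 : X.1 ≠ Z.1 := fun h => hXZ (Prod.ext h hXZ2)
  have d3 : Y.1 ≠ Z.1 := fun h => hYZ (Prod.ext h hYZ2)
  exact zmod3_triple _ _ _ d1 d2 d3 hPXY.1 hPXZ.1 hPYZ.1

lemma no_four {A B C D : ZMod 3 × ZMod p}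
    (hA : A ≠ 0) (hB : B ≠ 0) (hC : C ≠ 0) (hD : D ≠ 0)
    (hAB : A ≠ B) (hAC : A ≠ C) (hAD : A ≠ D) (hBC : B ≠ C) (hBD : B ≠ D) (hCD : C ≠ D)
    (pAB : PP A B) (pAC : PP A C) (pAD : PP A D)
    (pBC : PP B C) (pBD : PP B D) (pCD : PP C D) : False := by
  by_cases h2A : A.2 = 0
  · have h2B : B.2 ≠ 0 := fun h => pair_lemma hA hB hAB h2A h pAB
    have h2C : C.2 ≠ 0 := fun h => pair_lemma hA hC hAC h2A h pAC
    have h2D : D.2 ≠ 0 := fun h => pair_lemma hA hD hAD h2A h pAD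
    exact triple_lemma hBC hBD hCD h2B h2C h2D pBC pBD pCD
  · by_cases h2B : B.2 = 0
    · have h2C : C.2 ≠ 0 := fun h => pair_lemma hB hC hBC h2B h pBC
      have h2D : D.2 ≠ 0 := fun h => pair_lemma hB hD hBD h2B h pBD
      exact triple_lemma hAC hAD hCD h2A h2C h2D pAC pAD pCD
    · by_cases h2C : C.2 = 0
      · have h2D : D.2 ≠ 0 := fun h => pair_lemma hC hD hCD h2C h pCD
        exact triple_lemma hAB hAD hBD h2A h2B h2D pAB pAD pBD
      · exact triple_lemma hAB hAC hBC h2A h2B h2C pAB pAC pBC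

end Neg

theorem stmt19 (p : ℕ) (hp : p.Prime) (hp3 : 3 < p) (hmod : p % 3 = 2) :
    (NCAdj (p : ZMod (3 * p)) (2 * p - 1) ∧
     NCAdj (p : ZMod (3 * p)) (3 * p - 1) ∧
     NCAdj (2 * (p : ZMod (3 * p)) - 1) (3 * p - 1)) ∧
    ¬ ∃ a b c d : ZMod (3 * p),
      NCAdj a b ∧ NCAdj a c ∧ NCAdj a d ∧ NCAdj b c ∧ NCAdj b d ∧
        NCAdj c d := by
  haveI : Fact p.Prime := ⟨hp⟩
  haveI : NeZero (3 * p) := ⟨by positivity⟩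
  obtain ⟨t, rfl⟩ : ∃ t, p = 3 * t + 2 := ⟨p / 3, by omega⟩
  have ht : 1 ≤ t := by omega
  set M := 3 * (3 * t + 2) with hM
  -- the key relation in ZMod M
  have hkey : (3 : ZMod M) * (3 * (t : ZMod M) + 2) = 0 := by
    have := ZMod.natCast_self M
    rw [hM] at this
    push_cast at this
    linear_combination this
  -- names for the three vertices
  set N : ZMod M := ((3 * t + 2 : ℕ) : ZMod M) with hN
  have hNval : N = 3 * (t : ZMod M) + 2 := by rw [hN]; push_cast; ring
  -- rewrite vertices as casts of naturals
  have hv2 : 2 * N - 1 = ((6 * t + 3 : ℕ) : ZMod M) := by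
    rw [hNval]; push_cast; ring
  have hv3 : 3 * N - 1 = ((9 * t + 5 : ℕ) : ZMod M) := by
    rw [hNval]; push_cast; ring
  -- val facts for distinctness
  have hval : ∀ a : ℕ, a < M → ((a : ZMod M)).val = a := fun a ha =>
    ZMod.val_natCast_of_lt ha
  have cast_ne : ∀ a b : ℕ, a < M → b < M → a ≠ b →
      ((a : ZMod M) ≠ (b : ZMod M)) := by
    intro a b ha hb hab h
    exact hab (by rw [← hval a ha, ← hval b hb, h])
  have cast_ne0 : ∀ a : ℕ, a < M → a ≠ 0 → ((a : ZMod M) ≠ 0) := by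
    intro a ha ha0 h
    exact ha0 (by rw [← hval a ha, h, ZMod.val_zero])
  have hMlt : 3 * t + 2 < M ∧ 6 * t + 3 < M ∧ 9 * t + 5 < M := by
    constructor; omega; constructor; omega; omega
  -- nonzero and distinctness
  have ne1 : N ≠ 0 := cast_ne0 _ hMlt.1 (by omega)
  have ne2 : 2 * N - 1 ≠ 0 := hv2 ▸ cast_ne0 _ hMlt.2.1 (by omega)
  have ne3 : 3 * N - 1 ≠ 0 := hv3 ▸ cast_ne0 _ hMlt.2.2 (by omega)
  have d12 : N ≠ 2 * N - 1 := by rw [hv2, hN]; exact cast_ne _ _ hMlt.1 hMlt.2.1 (by omega)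
  have d13 : N ≠ 3 * N - 1 := by rw [hv3, hN]; exact cast_ne _ _ hMlt.1 hMlt.2.2 (by omega)
  have d23 : 2 * N - 1 ≠ 3 * N - 1 := by
    rw [hv2, hv3]; exact cast_ne _ _ hMlt.2.1 hMlt.2.2 (by omega)
  -- nil clean products
  have prod12 : N * (2 * N - 1) = 0 := by
    rw [hNval]; linear_combination (2 * (t : ZMod M) + 1) * hkey
  have prod13 : N * (3 * N - 1) = 2 * N := by
    rw [hNval]; linear_combination (3 * (t : ZMod M) + 1) * hkey
  have prod23 : (2 * N - 1) * (3 * N - 1) = N + 1 := by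
    rw [hNval]; linear_combination (6 * (t : ZMod M) + 2) * hkey
  have idem2N : IsIdempotentElem (2 * N) := by
    show 2 * N * (2 * N) = 2 * N
    rw [hNval]; linear_combination (4 * (t : ZMod M) + 2) * hkey
  have idemN1 : IsIdempotentElem (N + 1) := by
    show (N + 1) * (N + 1) = N + 1
    rw [hNval]; linear_combination ((t : ZMod M) + 1) * hkey
  have nc12 : IsNilCleanElem (N * (2 * N - 1)) := by
    rw [prod12]; exact nilclean_of_idem IsIdempotentElem.zero
  have nc13 : IsNilCleanElem (N * (3 * N - 1)) := by
    rw [prod13]; exact nilclean_of_idem idem2N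
  have nc23 : IsNilCleanElem ((2 * N - 1) * (3 * N - 1)) := by
    rw [prod23]; exact nilclean_of_idem idemN1
  -- vertices
  have vert1 : NCVertex N := ⟨ne1, 2 * N - 1, ne2, d12.symm, nc12⟩
  have vert2 : NCVertex (2 * N - 1) := ⟨ne2, 3 * N - 1, ne3, d23.symm, nc23⟩
  have vert3 : NCVertex (3 * N - 1) := ⟨ne3, N, ne1, d13, by rw [mul_comm]; exact nc13⟩
  constructor
  · refine ⟨⟨d12, vert1, vert2, nc12⟩, ⟨d13, vert1, vert3, nc13⟩, ⟨d23, vert2, vert3, nc23⟩⟩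
  -- negative part
  · rintro ⟨a, b, c, d, hab, hac, had, hbc, hbd, hcd⟩
    haveI : Fact ((3 * t + 2 : ℕ).Prime) := ‹_›
    have hcop : Nat.Coprime 3 (3 * t + 2) := by
      have h3 : Nat.Prime 3 := by norm_num
      exact (Nat.coprime_primes h3 hp).mpr (by omega)
    let f : ZMod M ≃+* ZMod 3 × ZMod (3 * t + 2) := ZMod.chineseRemainder hcop
    have finj : Function.Injective f := f.injective
    have fne : ∀ x : ZMod M, x ≠ 0 → f x ≠ 0 := by
      intro x hx h
      exact hx (finj (by rw [h, map_zero]))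
    have fprod : ∀ x y : ZMod M, IsNilCleanElem (x * y) → PP (f x) (f y) := by
      intro x y h
      have := comp01 (x := f x * f y) (by rw [← map_mul]; exact nilclean_map f h)
      exact ⟨this.1, this.2⟩
    obtain ⟨hab1, ⟨ha0, -⟩, ⟨hb0, -⟩, pab⟩ := hab
    obtain ⟨hac1, -, ⟨hc0, -⟩, pac⟩ := hac
    obtain ⟨had1, -, ⟨hd0, -⟩, pad⟩ := had
    obtain ⟨hbc1, -, -, pbc⟩ := hbc
    obtain ⟨hbd1, -, -, pbd⟩ := hbd
    obtain ⟨hcd1, -, -, pcd⟩ := hcd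
    exact no_four (fne a ha0) (fne b hb0) (fne c hc0) (fne d hd0)
      (fun h => hab1 (finj h)) (fun h => hac1 (finj h)) (fun h => had1 (finj h))
      (fun h => hbc1 (finj h)) (fun h => hbd1 (finj h)) (fun h => hcd1 (finj h))
      (fprod a b pab) (fprod a c pac) (fprod a d pad)
      (fprod b c pbc) (fprod b d pbd) (fprod c d pcd)
end
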